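/- arXiv:2509.04247 — 2 statements merged into one kernel-verified Lean document; each statement's English description precedes it below -/
import Mathlib

section
/- Let C be the Reed-Solomon code of dimension k evaluated at n distinct points α_1,…,α_n ∈ 𝔽_q (the image of polynomials of degree < k under evaluation). Then the Schur square C * C equals the Reed-Solomon code of dimension min(2k-1, n) at the same points, and hence dim(C * C) = min(2k - 1, n). -/
open Polynomial

/-- The Schur (componentwise) product of two linear codes in `F^n`. -/
def schurProduct {F : Type*} [Field F] {n : ℕ} (C D : Submodule F (Fin n → F)) :
    Submodule F (Fin n → F) :=
  Submodule.span F {x | ∃ c ∈ C, ∃ d ∈ D, x = c * d}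

/-- The Reed-Solomon code of dimension `k` with evaluation points `α 1, …, α n`:
the set of evaluation vectors of polynomials of degree `< k`. -/
def RSCode {F : Type*} [Field F] {n : ℕ} (α : Fin n → F) (k : ℕ) :
    Submodule F (Fin n → F) :=
  Submodule.span F
    {v | ∃ p : Polynomial F, p.degree < (k : ℕ) ∧ v = fun i => Polynomial.eval (α i) p}

noncomputable def evalLM {F : Type*} [Field F] {n : ℕ} (α : Fin n → F) :
    Polynomial F →ₗ[F] (Fin n → F) :=
  LinearMap.pi fun i => Polynomial.leval (α i)

lemma evalLM_apply {F : Type*} [Field F] {n : ℕ} (α : Fin n → F) (p : Polynomial F) (i : Fin n) :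
    evalLM α p i = p.eval (α i) := rfl

lemma rs_eq_map {F : Type*} [Field F] {n : ℕ} (α : Fin n → F) (m : ℕ) :
    RSCode α m = (Polynomial.degreeLT F m).map (evalLM α) := by
  have hset : {v : Fin n → F | ∃ p : Polynomial F, p.degree < (m : ℕ) ∧
      v = fun i => p.eval (α i)} = ((Polynomial.degreeLT F m).map (evalLM α) : Set (Fin n → F)) := by
    ext v
    simp only [Set.mem_setOf_eq, SetLike.mem_coe, Submodule.mem_map, Polynomial.mem_degreeLT]
    constructor
    · rintro ⟨p, hp, rfl⟩; exact ⟨p, hp, by ext i; rfl⟩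
    · rintro ⟨p, hp, rfl⟩; exact ⟨p, hp, by ext i; rfl⟩
  rw [RSCode, hset, Submodule.span_eq]

lemma rs_top {F : Type*} [Field F] {n : ℕ} (α : Fin n → F) (hα : Function.Injective α)
    {m : ℕ} (hm : n ≤ m) : RSCode α m = ⊤ := by
  rw [rs_eq_map]
  rw [Submodule.eq_top_iff']
  intro w
  refine ⟨Lagrange.interpolate Finset.univ α w, ?_, ?_⟩
  · simp only [SetLike.mem_coe, Polynomial.mem_degreeLT]
    refine lt_of_lt_of_le (Lagrange.degree_interpolate_lt _ (hα.injOn)) ?_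
    rw [Finset.card_univ, Fintype.card_fin]; exact_mod_cast hm
  · ext i
    exact Lagrange.eval_interpolate_at_node _ (hα.injOn) (Finset.mem_univ i)

lemma rs_dim {F : Type*} [Field F] {n : ℕ} (α : Fin n → F) (hα : Function.Injective α)
    {m : ℕ} (hm : m ≤ n) : Module.finrank F (RSCode α m) = m := by
  rw [rs_eq_map]
  set e := (evalLM α).comp (Polynomial.degreeLT F m).subtype with he
  have hker : ∀ p : Polynomial.degreeLT F m, e p = 0 → p = 0 := by
    rintro ⟨p, hp⟩ h
    have hz : ∀ i, p.eval (α i) = 0 := fun i => congrFun h i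
    have hp0 : p = 0 := by
      rcases eq_or_ne p 0 with h0 | h0
      · exact h0
      · refine p.eq_zero_of_natDegree_lt_card_of_eval_eq_zero hα hz ?_
        rw [Fintype.card_fin]
        exact lt_of_lt_of_le ((Polynomial.natDegree_lt_iff_degree_lt h0).2
          (Polynomial.mem_degreeLT.1 hp)) hm
    exact Subtype.ext hp0
  have hinj : Function.Injective e := LinearMap.ker_eq_bot.1 (LinearMap.ker_eq_bot'.2 hker)
  have hrange : LinearMap.range e = (Polynomial.degreeLT F m).map (evalLM α) := by
    rw [he, LinearMap.range_comp, Submodule.range_subtype]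
  haveI : Module.Finite F (Polynomial.degreeLT F m) :=
    Module.Finite.equiv (Polynomial.degreeLTEquiv F m).symm
  rw [← hrange, LinearMap.finrank_range_of_inj hinj,
    (Polynomial.degreeLTEquiv F m).finrank_eq, Module.finrank_fin_fun]

/-- For the Reed-Solomon code `C` of dimension `k` at `n` distinct points, the Schur square
`C * C` equals the Reed-Solomon code of dimension `min (2k - 1) n` at the same points, and
hence `dim (C * C) = min (2k - 1) n`. -/
theorem schur_square_RSCode {F : Type*} [Field F] [Fintype F] {n : ℕ}
    (α : Fin n → F) (hα : Function.Injective α) (k : ℕ) (hk1 : 1 ≤ k) (hkn : k ≤ n) :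
    schurProduct (RSCode α k) (RSCode α k) = RSCode α (min (2 * k - 1) n) ∧
      Module.finrank F (schurProduct (RSCode α k) (RSCode α k)) = min (2 * k - 1) n := by
  classical
  have h1 : schurProduct (RSCode α k) (RSCode α k) ≤ RSCode α (2 * k - 1) := by
    rw [schurProduct, Submodule.span_le]
    rintro x ⟨c, hc, d, hd, rfl⟩
    rw [rs_eq_map] at hc hd
    obtain ⟨p, hp, rfl⟩ := hc
    obtain ⟨q, hq, rfl⟩ := hd
    have hdeg : (p * q).degree < ((2 * k - 1 : ℕ) : WithBot ℕ) := by
      rcases eq_or_ne (p * q) 0 with h0 | h0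
      · rw [h0, Polynomial.degree_zero]; exact WithBot.bot_lt_coe _
      · have hp0 : p ≠ 0 := fun h => h0 (by simp [h])
        have hq0 : q ≠ 0 := fun h => h0 (by simp [h])
        rw [← Polynomial.natDegree_lt_iff_degree_lt h0, Polynomial.natDegree_mul hp0 hq0]
        have h1 := (Polynomial.natDegree_lt_iff_degree_lt hp0).2 (Polynomial.mem_degreeLT.1 hp)
        have h2 := (Polynomial.natDegree_lt_iff_degree_lt hq0).2 (Polynomial.mem_degreeLT.1 hq)
        omega
    have : SetLike.coe (RSCode α (2 * k - 1)) = ((Polynomial.degreeLT F (2 * k - 1)).map (evalLM α) : Set _) := by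
      rw [rs_eq_map]
    rw [SetLike.mem_coe]
    show _ ∈ RSCode α (2 * k - 1)
    rw [rs_eq_map]
    exact ⟨p * q, Polynomial.mem_degreeLT.2 hdeg, by ext i; simp [evalLM_apply]⟩
  have h2 : RSCode α (2 * k - 1) ≤ schurProduct (RSCode α k) (RSCode α k) := by
    rw [rs_eq_map, Polynomial.degreeLT_eq_span_X_pow, Submodule.map_span, Submodule.span_le]
    rintro x ⟨p, hp, rfl⟩
    simp only [Finset.coe_image, Set.mem_image, Finset.mem_coe, Finset.mem_range] at hp
    obtain ⟨j, hj, rfl⟩ := hp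
    set a := min j (k - 1) with ha
    set b := j - a with hb
    have hab : a + b = j := by omega
    have hak : a < k := by omega
    have hbk : b < k := by omega
    have hmemX : ∀ c : ℕ, c < k → evalLM α (X ^ c) ∈ RSCode α k := by
      intro c hc
      rw [rs_eq_map]
      refine ⟨X ^ c, Polynomial.mem_degreeLT.2 ?_, rfl⟩
      rw [Polynomial.degree_X_pow]
      exact_mod_cast hc
    refine Submodule.subset_span ⟨evalLM α (X ^ a), hmemX a hak, evalLM α (X ^ b), hmemX b hbk, ?_⟩
    ext i
    simp only [Pi.mul_apply, evalLM_apply, Polynomial.eval_pow, Polynomial.eval_X, ← pow_add, hab]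
  have heq : schurProduct (RSCode α k) (RSCode α k) = RSCode α (min (2 * k - 1) n) := by
    rcases le_total (2 * k - 1) n with h | h
    · rw [min_eq_left h]; exact le_antisymm h1 h2
    · rw [min_eq_right h]
      have htop1 : RSCode α n = ⊤ := rs_top α hα le_rfl
      have htop2 : RSCode α (2 * k - 1) = ⊤ := rs_top α hα h
      rw [htop1]
      exact le_antisymm le_top (htop2 ▸ h2)
  refine ⟨heq, ?_⟩
  rw [heq, rs_dim α hα (min_le_right _ _)]
end

section
/- With notation as above, C_L(D, G) is MDS (d = n-k+1) if and only if for any k-1 points P_{i_1},…,P_{i_{k-1}} in supp(D), the point Q = G ⊖ P_{i_1} ⊖ ⋯ ⊖ P_{i_{k-1}} (the unique point such that G - ΣP_{i_t} - Q is equivalent to a principal divisor, via the elliptic group law) satisfies Q ∉ supp(D) or Q ∈ {P_{i_1},…,P_{i_{k-1}}}. -/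
/-- The degree `Σ n_P` of a divisor. -/
def divDeg {Pt : Type*} (D : Pt →₀ ℤ) : ℤ := D.sum fun _ n => n

/-- The group-law sum `⊕ [n_P] P` of a divisor, computed in the group of points. -/
def divPointSum {Pt : Type*} [AddCommGroup Pt] (D : Pt →₀ ℤ) : Pt := D.sum fun P n => n • P

lemma divDeg_eq_hom {Pt : Type*} (D : Pt →₀ ℤ) :
    divDeg D = Finsupp.liftAddHom (fun _ : Pt => AddMonoidHom.id ℤ) D := rfl

lemma divPointSum_eq_hom {Pt : Type*} [AddCommGroup Pt] (D : Pt →₀ ℤ) :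
    divPointSum D = Finsupp.liftAddHom (fun p : Pt => zmultiplesHom Pt p) D := rfl

lemma divDeg_sub {Pt : Type*} (A B : Pt →₀ ℤ) : divDeg (A - B) = divDeg A - divDeg B := by
  simp [divDeg_eq_hom, map_sub]

lemma divDeg_neg {Pt : Type*} (A : Pt →₀ ℤ) : divDeg (-A) = -divDeg A := by
  simp [divDeg_eq_hom, map_neg]

lemma divDeg_sum {Pt ι : Type*} (s : Finset ι) (f : ι → (Pt →₀ ℤ)) :
    divDeg (∑ i ∈ s, f i) = ∑ i ∈ s, divDeg (f i) := by
  simp [divDeg_eq_hom, map_sum]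

lemma divDeg_single {Pt : Type*} (p : Pt) (m : ℤ) : divDeg (Finsupp.single p m) = m := by
  simp [divDeg_eq_hom]

lemma divPointSum_sub {Pt : Type*} [AddCommGroup Pt] (A B : Pt →₀ ℤ) :
    divPointSum (A - B) = divPointSum A - divPointSum B := by
  simp [divPointSum_eq_hom, map_sub]

lemma divPointSum_neg {Pt : Type*} [AddCommGroup Pt] (A : Pt →₀ ℤ) :
    divPointSum (-A) = -divPointSum A := by
  simp [divPointSum_eq_hom, map_neg]

lemma divPointSum_sum {Pt ι : Type*} [AddCommGroup Pt] (s : Finset ι) (f : ι → (Pt →₀ ℤ)) :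
    divPointSum (∑ i ∈ s, f i) = ∑ i ∈ s, divPointSum (f i) := by
  simp [divPointSum_eq_hom, map_sum]

lemma divPointSum_single {Pt : Type*} [AddCommGroup Pt] (p : Pt) (m : ℤ) :
    divPointSum (Finsupp.single p m) = m • p := by
  simp [divPointSum_eq_hom]

/-- In the elliptic AG-code setting (genus 1, `n > deg G = k > 1`, `D = P₁ + ⋯ + P_n` a sum
of distinct rational points avoiding `supp G`), the code `C_L(D, G)` is MDS, i.e.
`d = n - k + 1`, if and only if for any `k - 1` points `P_{i₁}, …, P_{i_{k-1}}` in
`supp D`, the point `Q = G ⊖ P_{i₁} ⊖ ⋯ ⊖ P_{i_{k-1}}` (computed via the elliptic group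
law, so that `G - Σ_t P_{i_t} - Q` is a principal divisor) satisfies `Q ∉ supp D` or
`Q ∈ {P_{i₁}, …, P_{i_{k-1}}}`. -/
theorem elliptic_AG_code_MDS_iff
    {K F Pt : Type*} [Field K] [DecidableEq K] [Field F] [Algebra K F] [AddCommGroup Pt]
    (ordv : Pt → F → ℤ)
    (hmul : ∀ Q (f g : F), f ≠ 0 → g ≠ 0 → ordv Q (f * g) = ordv Q f + ordv Q g)
    (haddv : ∀ Q (f g : F), f ≠ 0 → g ≠ 0 → f + g ≠ 0 →
      min (ordv Q f) (ordv Q g) ≤ ordv Q (f + g))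
    (hconst : ∀ Q (c : K), c ≠ 0 → ordv Q ((algebraMap K F) c) = 0)
    (LL : (Pt →₀ ℤ) → Submodule K F)
    (hLL : ∀ G f, f ∈ LL G ↔ f = 0 ∨ ∀ Q, -(G Q) ≤ ordv Q f)
    (hRR : ∀ G : Pt →₀ ℤ, 1 ≤ divDeg G → (Module.finrank K (LL G) : ℤ) = divDeg G)
    (hneg : ∀ G : Pt →₀ ℤ, divDeg G < 0 → LL G = ⊥)
    -- a degree-zero divisor is principal iff its group-law point sum is `O`
    -- (the characterization of principal divisors on an elliptic curve):
    (hprinc_iff : ∀ D : Pt →₀ ℤ, divDeg D = 0 →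
      ((∃ f : F, f ≠ 0 ∧ ∀ Q : Pt, ordv Q f = D Q) ↔ divPointSum D = 0))
    (eval : Pt → F → K)
    (hev0 : ∀ Q, eval Q 0 = 0)
    (hevC : ∀ Q (c : K), eval Q ((algebraMap K F) c) = c)
    (hevadd : ∀ Q (f g : F), f ≠ 0 → g ≠ 0 → f + g ≠ 0 → 0 ≤ ordv Q f → 0 ≤ ordv Q g →
      eval Q (f + g) = eval Q f + eval Q g)
    (hevmul : ∀ Q (f g : F), f ≠ 0 → g ≠ 0 → 0 ≤ ordv Q f → 0 ≤ ordv Q g →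
      eval Q (f * g) = eval Q f * eval Q g)
    (hevzero : ∀ Q (f : F), f ≠ 0 → 0 ≤ ordv Q f → (eval Q f = 0 ↔ 0 < ordv Q f))
    (n k : ℕ) (hk : 1 < k) (hkn : k < n)
    (G : Pt →₀ ℤ) (hG : divDeg G = k)
    (P : Fin n → Pt) (hPinj : Function.Injective P) (hPG : ∀ i, G (P i) = 0)
    (C : Submodule K (Fin n → K))
    (hC : C = Submodule.span K ((fun f => fun i => eval (P i) f) '' (LL G : Set F)))
    (d : ℕ)
    (hd_le : ∀ c ∈ C, c ≠ 0 → d ≤ hammingNorm c)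
    (hd_attained : ∃ c ∈ C, c ≠ 0 ∧ hammingNorm c = d) :
    d = n - k + 1 ↔
      ∀ s : Fin (k - 1) → Fin n, Function.Injective s →
        (divPointSum G - ∑ t, P (s t)) ∉ Set.range P ∨
          ∃ t, divPointSum G - ∑ t', P (s t') = P (s t) := by
  classical
  set ev : F → (Fin n → K) := fun f i => eval (P i) f with hev_def
  -- the indicator divisor of a finite set of indices
  set DT : Finset (Fin n) → (Pt →₀ ℤ) := fun T => ∑ i ∈ T, Finsupp.single (P i) (1 : ℤ)
    with hDT_def
  have hDT_apply : ∀ T (Q : Pt), DT T Q = ∑ i ∈ T, if i ∈ T ∧ P i = Q then (1:ℤ) else 0 := by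
    intro T Q
    rw [hDT_def]
    rw [Finsupp.finset_sum_apply]
    refine Finset.sum_congr rfl fun i hi => ?_
    rw [Finsupp.single_apply]
    simp [hi]
  have hDT_mem : ∀ T, ∀ j ∈ T, DT T (P j) = 1 := by
    intro T j hj
    rw [hDT_apply]
    have : ∀ i ∈ T, (if i ∈ T ∧ P i = P j then (1:ℤ) else 0) = if i = j then 1 else 0 := by
      intro i hi
      by_cases h : i = j
      · subst h; simp [hi]
      · simp [h, hPinj.eq_iff]
    rw [Finset.sum_congr rfl this, Finset.sum_ite_eq' T j (fun _ => (1:ℤ))]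
    simp [hj]
  have hDT_nmem : ∀ T (Q : Pt), (∀ i ∈ T, P i ≠ Q) → DT T Q = 0 := by
    intro T Q hQ
    rw [hDT_apply]
    refine Finset.sum_eq_zero fun i hi => ?_
    simp [hQ i hi]
  have hDT_nonneg : ∀ T (Q : Pt), 0 ≤ DT T Q := by
    intro T Q
    rw [hDT_apply]
    exact Finset.sum_nonneg fun i _ => by positivity
  have hDT_deg : ∀ T, divDeg (DT T) = T.card := by
    intro T
    rw [hDT_def, divDeg_sum]
    simp [divDeg_single]
  have hDT_psum : ∀ T, divPointSum (DT T) = ∑ i ∈ T, P i := by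
    intro T
    rw [hDT_def, divPointSum_sum]
    simp [divPointSum_single]
  -- basic order facts for elements of L(G)
  have hordP : ∀ f, f ∈ LL G → f ≠ 0 → ∀ i, 0 ≤ ordv (P i) f := by
    intro f hf hf0 i
    rcases (hLL G f).1 hf with h | h
    · exact absurd h hf0
    · simpa [hPG i] using h (P i)
  -- membership in the smaller space from vanishing
  have hvanish_mem : ∀ (T : Finset (Fin n)) f, f ∈ LL G → f ≠ 0 →
      (∀ i ∈ T, eval (P i) f = 0) → f ∈ LL (G - DT T) := by
    intro T f hf hf0 hvan
    rw [hLL]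
    right
    intro Q
    by_cases hQ : ∃ j ∈ T, P j = Q
    · obtain ⟨j, hjT, hjQ⟩ := hQ
      subst hjQ
      have h1 : (G - DT T) (P j) = -1 := by
        rw [Finsupp.sub_apply, hPG j, hDT_mem T j hjT]; ring
      rw [h1]
      have := (hevzero (P j) f hf0 (hordP f hf hf0 j)).1 (hvan j hjT)
      omega
    · push_neg at hQ
      rw [Finsupp.sub_apply, hDT_nmem T Q hQ]
      rcases (hLL G f).1 hf with h | h
      · exact absurd h hf0
      · simpa using h Q
  -- at most k zeros among the P i
  have hcard_le : ∀ (T : Finset (Fin n)) f, f ∈ LL G → f ≠ 0 →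
      (∀ i ∈ T, eval (P i) f = 0) → T.card ≤ k := by
    intro T f hf hf0 hvan
    by_contra hlt
    push_neg at hlt
    have hdeg : divDeg (G - DT T) < 0 := by
      rw [divDeg_sub, hG, hDT_deg]
      have : (k : ℤ) < T.card := by exact_mod_cast hlt
      omega
    have := hneg _ hdeg
    have hm := hvanish_mem T f hf hf0 hvan
    rw [this] at hm
    exact hf0 (by simpa using hm)
  -- exactly k zeros forces the point-sum relation
  have hexact : ∀ (T : Finset (Fin n)) f, f ∈ LL G → f ≠ 0 →
      (∀ i ∈ T, eval (P i) f = 0) → T.card = k → divPointSum G = ∑ i ∈ T, P i := by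
    intro T f hf hf0 hvan hcard
    set A := G - DT T with hA_def
    have hAdeg : divDeg A = 0 := by
      rw [hA_def, divDeg_sub, hG, hDT_deg, hcard]; ring
    have hfA : f ∈ LL A := hvanish_mem T f hf hf0 hvan
    have hordle : ∀ Q, -(A Q) ≤ ordv Q f := by
      intro Q
      rcases (hLL A f).1 hfA with h | h
      · exact absurd h hf0
      · exact h Q
    have hordeq : ∀ Q, ordv Q f = -(A Q) := by
      intro Q
      by_contra hne
      have hlt : -(A Q) < ordv Q f := lt_of_le_of_ne (hordle Q) (Ne.symm hne)
      have hmem : f ∈ LL (A - Finsupp.single Q 1) := by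
        rw [hLL]
        right
        intro Q'
        rw [Finsupp.sub_apply, Finsupp.single_apply]
        by_cases h : Q = Q'
        · subst h; simp; omega
        · simp [h]; exact hordle Q'
      have hdeg : divDeg (A - Finsupp.single Q 1) < 0 := by
        rw [divDeg_sub, hAdeg, divDeg_single]; norm_num
      have := hneg _ hdeg
      rw [this] at hmem
      exact hf0 (by simpa using hmem)
    have hprin := (hprinc_iff (-A) (by rw [divDeg_neg, hAdeg]; ring)).1
      ⟨f, hf0, fun Q => by rw [hordeq Q, Finsupp.neg_apply]⟩
    rw [divPointSum_neg, neg_eq_zero, hA_def, divPointSum_sub, hDT_psum,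
      sub_eq_zero] at hprin
    exact hprin
  -- conversely, the point-sum relation yields a function with prescribed zeros
  have hconstruct : ∀ T : Finset (Fin n), T.card = k → divPointSum G = ∑ i ∈ T, P i →
      ∃ f, f ∈ LL G ∧ f ≠ 0 ∧ ∀ i, (eval (P i) f = 0 ↔ i ∈ T) := by
    intro T hcard hsum
    set A := G - DT T with hA_def
    have hAdeg : divDeg (-A) = 0 := by
      rw [divDeg_neg, hA_def, divDeg_sub, hG, hDT_deg, hcard]; ring
    have hzero : divPointSum (-A) = 0 := by
      rw [divPointSum_neg, hA_def, divPointSum_sub, hDT_psum, ← hsum]; simp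
    obtain ⟨f, hf0, hford⟩ := (hprinc_iff (-A) hAdeg).2 hzero
    have hford' : ∀ Q, ordv Q f = DT T Q - G Q := by
      intro Q
      rw [hford Q, Finsupp.neg_apply, hA_def, Finsupp.sub_apply]; ring
    have hfG : f ∈ LL G := by
      rw [hLL]
      right
      intro Q
      rw [hford' Q]
      have := hDT_nonneg T Q
      omega
    refine ⟨f, hfG, hf0, fun i => ?_⟩
    have hordi : ordv (P i) f = DT T (P i) := by rw [hford' (P i), hPG i]; ring
    have hnn : 0 ≤ ordv (P i) f := by rw [hordi]; exact hDT_nonneg T (P i)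
    rw [hevzero (P i) f hf0 hnn, hordi]
    constructor
    · intro h
      by_contra hiT
      rw [hDT_nmem T (P i) (fun j hj hji => hiT (by rwa [← hPinj hji]))] at h
      omega
    · intro h
      rw [hDT_mem T i h]
      norm_num
  -- linearity of evaluation on L(G)
  have hev_smul : ∀ (c : K) (f : F), f ∈ LL G → ev (c • f) = c • ev f := by
    intro c f hf
    by_cases hc : c = 0
    · subst hc; funext i; simp [hev_def, hev0]
    by_cases hf0 : f = 0
    · subst hf0; funext i; simp [hev_def, hev0]
    funext i
    have halg : (c • f : F) = algebraMap K F c * f := Algebra.smul_def c f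
    have hac0 : (algebraMap K F) c ≠ 0 := by
      simpa using (map_ne_zero (algebraMap K F)).2 hc
    rw [hev_def]
    simp only [halg]
    rw [hevmul (P i) _ f hac0 hf0 (by rw [hconst (P i) c hc]) (hordP f hf hf0 i),
      hevC (P i) c]
    rfl
  have hev_add : ∀ f g : F, f ∈ LL G → g ∈ LL G → ev (f + g) = ev f + ev g := by
    intro f g hf hg
    by_cases hf0 : f = 0
    · subst hf0; funext i; simp [hev_def, hev0]
    by_cases hg0 : g = 0
    · subst hg0; funext i; simp [hev_def, hev0]
    by_cases hfg : f + g = 0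
    · have hgf : g = (-1 : K) • f := by
        have : g = -f := by linear_combination hfg
        rw [this, neg_one_smul]
      funext i
      have h1 : ev g = (-1 : K) • ev f := by rw [hgf, hev_smul (-1) f hf]
      have : ev (f + g) i = 0 := by rw [hfg]; simp [hev_def, hev0]
      rw [this]
      simp [h1]
    funext i
    exact hevadd (P i) f g hf0 hg0 hfg (hordP f hf hf0 i) (hordP g hg hg0 i)
  -- every codeword is an evaluation
  have hmemC : ∀ c ∈ C, ∃ f, f ∈ LL G ∧ ev f = c := by
    intro c hc
    rw [hC] at hc
    refine Submodule.span_induction (p := fun c _ => ∃ f, f ∈ LL G ∧ ev f = c)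
      ?_ ?_ ?_ ?_ hc
    · rintro x ⟨f, hf, rfl⟩
      exact ⟨f, hf, rfl⟩
    · exact ⟨0, (LL G).zero_mem, by funext i; simp [hev_def, hev0]⟩
    · rintro x y hx hy ⟨f, hf, rfl⟩ ⟨g, hg, rfl⟩
      exact ⟨f + g, (LL G).add_mem hf hg, hev_add f g hf hg⟩
    · rintro a x hx ⟨f, hf, rfl⟩
      exact ⟨a • f, (LL G).smul_mem a hf, hev_smul a f hf⟩
  -- evaluations of L(G) are in C
  have hevC_mem : ∀ f ∈ LL G, ev f ∈ C := by
    intro f hf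
    rw [hC]
    exact Submodule.subset_span ⟨f, hf, rfl⟩
  -- weight formula
  have hwt : ∀ f : F, hammingNorm (ev f) + (Finset.univ.filter
      fun i => eval (P i) f = 0).card = n := by
    intro f
    have h := Finset.card_filter_add_card_filter_not
      (s := (Finset.univ : Finset (Fin n))) (p := fun i => eval (P i) f = 0)
    rw [Finset.card_univ, Fintype.card_fin] at h
    have h2 : hammingNorm (ev f) = (Finset.univ.filter
        fun i => ¬ (eval (P i) f = 0)).card := by
      unfold hammingNorm
      congr 1
    omega
  -- a nonzero element of L(G) has nonzero evaluation vector
  have hev_ne : ∀ f, f ∈ LL G → f ≠ 0 → ev f ≠ 0 := by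
    intro f hf hf0 h
    have hall : ∀ i ∈ (Finset.univ : Finset (Fin n)), eval (P i) f = 0 := by
      intro i _
      have := congrFun h i
      simpa [hev_def] using this
    have := hcard_le Finset.univ f hf hf0 hall
    rw [Finset.card_univ, Fintype.card_fin] at this
    omega
  -- the Singleton bound: d ≤ n - k + 1
  have hd_upper : d ≤ n - k + 1 := by
    obtain ⟨T₀, -, hT₀card⟩ := Finset.exists_subset_card_eq (s := (Finset.univ : Finset (Fin n))) (n := k - 1)
      (by rw [Finset.card_univ, Fintype.card_fin]; omega)
    have hdeg1 : divDeg (G - DT T₀) = 1 := by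
      rw [divDeg_sub, hG, hDT_deg, hT₀card]
      have : (1:ℤ) ≤ k := by exact_mod_cast hk.le
      push_cast [Nat.cast_sub hk.le]
      ring
    have hrk := hRR (G - DT T₀) (by rw [hdeg1])
    rw [hdeg1] at hrk
    have hne_bot : LL (G - DT T₀) ≠ ⊥ := by
      intro hbot
      rw [hbot] at hrk
      simp [finrank_bot] at hrk
    obtain ⟨f, hfA, hf0⟩ := Submodule.ne_bot_iff _ |>.1 hne_bot
    have hfG : f ∈ LL G := by
      rw [hLL]
      right
      intro Q
      rcases (hLL _ f).1 hfA with h | h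
      · exact absurd h hf0
      · have := h Q
        rw [Finsupp.sub_apply] at this
        have := hDT_nonneg T₀ Q
        omega
    have hvan : ∀ i ∈ T₀, eval (P i) f = 0 := by
      intro i hi
      have hord : 1 ≤ ordv (P i) f := by
        rcases (hLL _ f).1 hfA with h | h
        · exact absurd h hf0
        · have := h (P i)
          rw [Finsupp.sub_apply, hPG i, hDT_mem T₀ i hi] at this
          omega
      exact (hevzero (P i) f hf0 (by omega)).2 (by omega)
    have hsub : T₀ ⊆ Finset.univ.filter fun i => eval (P i) f = 0 := by
      intro i hi
      exact Finset.mem_filter.2 ⟨Finset.mem_univ i, hvan i hi⟩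
    have hcard := Finset.card_le_card hsub
    rw [hT₀card] at hcard
    have hw := hwt f
    have := hd_le (ev f) (hevC_mem f hfG) (hev_ne f hfG hf0)
    omega
  constructor
  · -- MDS → condition, by contraposition
    intro hd s hsinj
    by_contra hcon
    push_neg at hcon
    obtain ⟨⟨j, hj⟩, hne⟩ := hcon
    -- hj : P j = divPointSum G - ∑ t, P (s t)
    set T : Finset (Fin n) := insert j (Finset.univ.image s) with hT_def
    have hjim : j ∉ Finset.univ.image s := by
      intro hjim
      obtain ⟨t, -, ht⟩ := Finset.mem_image.1 hjim
      exact hne t (by rw [← hj, ht])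
    have hTcard : T.card = k := by
      rw [hT_def, Finset.card_insert_of_notMem hjim,
        Finset.card_image_of_injective _ hsinj, Finset.card_univ, Fintype.card_fin]
      omega
    have hTsum : divPointSum G = ∑ i ∈ T, P i := by
      rw [hT_def, Finset.sum_insert hjim,
        Finset.sum_image (fun a _ b _ hab => hsinj hab)]
      have : divPointSum G - ∑ t, P (s t) = P j := hj.symm
      have h2 : divPointSum G = P j + ∑ t, P (s t) := by
        rw [← this]; abel
      rw [h2]
    obtain ⟨f, hfG, hf0, hzeros⟩ := hconstruct T hTcard hTsum
    have hfilter : (Finset.univ.filter fun i => eval (P i) f = 0) = T := by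
      ext i
      simp [hzeros i]
    have hw := hwt f
    rw [hfilter, hTcard] at hw
    have := hd_le (ev f) (hevC_mem f hfG) (hev_ne f hfG hf0)
    omega
  · -- condition → MDS
    intro hcond
    refine le_antisymm hd_upper ?_
    by_contra hlt
    push_neg at hlt
    -- then d ≤ n - k, so there is a codeword of weight ≤ n - k
    obtain ⟨c, hcC, hc0, hcw⟩ := hd_attained
    obtain ⟨f, hfG, rfl⟩ := hmemC c hcC
    have hf0 : f ≠ 0 := by rintro rfl; exact hc0 (by funext i; simp [hev_def, hev0])
    set Z : Finset (Fin n) := Finset.univ.filter fun i => eval (P i) f = 0 with hZ_def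
    have hZvan : ∀ i ∈ Z, eval (P i) f = 0 := fun i hi => (Finset.mem_filter.1 hi).2
    have hZle : Z.card ≤ k := hcard_le Z f hfG hf0 hZvan
    have hw := hwt f
    rw [← hZ_def] at hw
    have hZk : Z.card = k := by omega
    have hsum := hexact Z f hfG hf0 hZvan hZk
    -- pick j ∈ Z and enumerate the rest
    have hZne : Z.Nonempty := Finset.card_pos.1 (by omega)
    obtain ⟨j, hjZ⟩ := hZne
    set T' : Finset (Fin n) := Z.erase j with hT'_def
    have hT'card : T'.card = k - 1 := by
      rw [hT'_def, Finset.card_erase_of_mem hjZ, hZk]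
    have e := T'.orderIsoOfFin hT'card
    set s : Fin (k - 1) → Fin n := fun t => (e t : Fin n) with hs_def
    have hsinj : Function.Injective s := fun a b hab => e.injective (Subtype.ext hab)
    have hssum : ∑ t, P (s t) = ∑ i ∈ T', P i := by
      rw [hs_def]
      rw [← Finset.sum_coe_sort T' P]
      exact Fintype.sum_equiv e.toEquiv _ _ (fun t => rfl)
    have hQ : divPointSum G - ∑ t, P (s t) = P j := by
      rw [hssum, hsum, hT'_def, ← Finset.add_sum_erase Z P hjZ]
      abel
    rcases hcond s hsinj with h | ⟨t, ht⟩
    · exact h ⟨j, hQ.symm⟩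
    · rw [hQ] at ht
      have : j = s t := hPinj ht
      have : j ∈ T' := by rw [this, hs_def]; exact (e t).2
      exact Finset.notMem_erase j Z this
end
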